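/- arXiv:2004.00751 — 2 statements merged into one kernel-verified Lean document; each statement's English description precedes it below -/
import Mathlib

section
/- Let D be a maximal Arrow's single-peaked domain on a set A with inherited permutation θ_D. If D is self-paired, then θ_D has order 2 (θ_D² is the identity). -/
/-- A list `l` represents a linear order on the finite set `A`:
it is duplicate-free and its members are exactly the elements of `A`,
listed from most to least preferred. -/
def IsLinOrd {α : Type*} (A : Finset α) (l : List α) : Prop :=
  l.Nodup ∧ ∀ a : α, a ∈ l ↔ a ∈ A

/-- The restriction of the order `l` to the subset `S`. -/
def restrictList {α : Type*} [DecidableEq α] (l : List α) (S : Finset α) : List α :=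
  l.filter (fun a => a ∈ S)

/-- The domain contraction of `D` on `S`: the set of restrictions to `S`
of the orders in `D` (as a set, so duplicates are automatically removed). -/
def contraction {α : Type*} [DecidableEq α] (D : Set (List α)) (S : Finset α) :
    Set (List α) :=
  (fun l => restrictList l S) '' D

/-- `D` contains a Condorcet triple: elements `a, b, c` and orders
`v₁, v₂, v₃ ∈ D` restricting on `{a,b,c}` to `a≻b≻c`, `b≻c≻a`, `c≻a≻b`. -/
def CondorcetTriple {α : Type*} [DecidableEq α] (D : Set (List α)) : Prop :=
  ∃ a b c : α, a ≠ b ∧ a ≠ c ∧ b ≠ c ∧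
    ∃ v₁ ∈ D, ∃ v₂ ∈ D, ∃ v₃ ∈ D,
      restrictList v₁ {a, b, c} = [a, b, c] ∧
      restrictList v₂ {a, b, c} = [b, c, a] ∧
      restrictList v₃ {a, b, c} = [c, a, b]

/-- A Condorcet domain on `A`: a set of linear orders on `A` with no Condorcet triple. -/
def IsCondorcetDomain {α : Type*} [DecidableEq α] (A : Finset α) (D : Set (List α)) : Prop :=
  (∀ l ∈ D, IsLinOrd A l) ∧ ¬ CondorcetTriple D

/-- A maximal Condorcet domain on `A`: no strict superset is a Condorcet domain on `A`. -/
def IsMaxCondorcetDomain {α : Type*} [DecidableEq α] (A : Finset α) (D : Set (List α)) : Prop :=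
  IsCondorcetDomain A D ∧ ∀ D' : Set (List α), IsCondorcetDomain A D' → D ⊆ D' → D' = D

/-- `x` is a never-bottom element of the triple `T` for `D`:
no order of `D` ranks `x` below both other elements of `T`. -/
def NeverBottom {α : Type*} [DecidableEq α] (D : Set (List α)) (T : Finset α) (x : α) : Prop :=
  x ∈ T ∧ ∀ l ∈ D, (restrictList l T).getLast? ≠ some x

/-- An Arrow's single-peaked domain on `A`: a Condorcet domain such that every
3-element subset of `A` has a never-bottom element. -/
def IsArrowSP {α : Type*} [DecidableEq α] (A : Finset α) (D : Set (List α)) : Prop :=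
  IsCondorcetDomain A D ∧
    ∀ T : Finset α, T ⊆ A → T.card = 3 → ∃ x : α, NeverBottom D T x

/-- A maximal Arrow's single-peaked domain on `A`. -/
def IsMaxArrowSP {α : Type*} [DecidableEq α] (A : Finset α) (D : Set (List α)) : Prop :=
  IsMaxCondorcetDomain A D ∧ IsArrowSP A D

/-- `a` is a terminal element of `D`: some order of `D` ends with (least element) `a`. -/
def TerminalElt {α : Type*} (D : Set (List α)) (a : α) : Prop :=
  ∃ l ∈ D, l.getLast? = some a

/-- `l` is an extremal order of `D`: `l ∈ D`, and the first and last elements of `l`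
are the two terminal elements of `D`. -/
def IsExtremal {α : Type*} (D : Set (List α)) (l : List α) : Prop :=
  l ∈ D ∧ ∃ s t : α, s ≠ t ∧ l.head? = some s ∧ l.getLast? = some t ∧
    TerminalElt D s ∧ TerminalElt D t ∧ ∀ a : α, TerminalElt D a → a = s ∨ a = t

/-- The position of `a` in the order `l`, the first element being in position 1. -/
def posIn {α : Type*} [DecidableEq α] (l : List α) (a : α) : ℕ :=
  l.idxOf a + 1


lemma map_fix_aux {α : Type*} (g : α → α) : ∀ l : List α, l.map g = l → ∀ a ∈ l, g a = a := by
  intro l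
  induction l with
  | nil => intro _ a ha; simp at ha
  | cons b t ih =>
    intro h a ha
    rw [List.map_cons, List.cons.injEq] at h
    rcases List.mem_cons.mp ha with rfl | ha
    · exact h.1
    · exact ih h.2 a ha

lemma mem_D_iff {α : Type*} (D : Set (List α)) (θ : Equiv.Perm α)
    (hsp : (fun l : List α => l.map θ) '' D = D) (l : List α) :
    l ∈ D ↔ l.map θ ∈ D := by
  constructor
  · intro hl; rw [← hsp]; exact ⟨l, hl, rfl⟩
  · intro hl
    rw [← hsp] at hl
    obtain ⟨m, hm, hml⟩ := hl
    have : m = l := by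
      have := congrArg (List.map (θ.symm : α → α)) hml
      simpa [List.map_map, Function.comp] using this
    rwa [← this]

lemma terminal_iff {α : Type*} (D : Set (List α)) (θ : Equiv.Perm α)
    (hsp : (fun l : List α => l.map θ) '' D = D) (a : α) :
    TerminalElt D a ↔ TerminalElt D (θ a) := by
  constructor
  · rintro ⟨l, hl, hlast⟩
    refine ⟨l.map θ, (mem_D_iff D θ hsp l).mp hl, ?_⟩
    rw [List.getLast?_map, hlast, Option.map_some]
  · rintro ⟨l, hl, hlast⟩
    refine ⟨l.map (θ.symm : α → α), ?_, ?_⟩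
    · rw [mem_D_iff D θ hsp]
      have : (l.map (θ.symm : α → α)).map θ = l := by
        simp [List.map_map, Function.comp]
      rwa [this]
    · rw [List.getLast?_map, hlast, Option.map_some]
      simp

lemma extremal_map {α : Type*} (D : Set (List α)) (θ : Equiv.Perm α)
    (hsp : (fun l : List α => l.map θ) '' D = D) (l : List α) (h : IsExtremal D l) :
    IsExtremal D (l.map θ) := by
  obtain ⟨hl, s, t, hst, hh, hla, hts, htt, hun⟩ := h
  refine ⟨(mem_D_iff D θ hsp l).mp hl, θ s, θ t, by simpa using hst, ?_, ?_, ?_, ?_, ?_⟩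
  · rw [List.head?_map, hh, Option.map_some]
  · rw [List.getLast?_map, hla, Option.map_some]
  · exact (terminal_iff D θ hsp s).mp hts
  · exact (terminal_iff D θ hsp t).mp htt
  · intro a ha
    have ha' : TerminalElt D (θ.symm a) := by
      rw [terminal_iff D θ hsp]
      simpa using ha
    rcases hun _ ha' with h1 | h1
    · left; rw [← h1]; simp
    · right; rw [← h1]; simp

/-- If a maximal Arrow's single-peaked domain `D`, with extremal orders `P` and
`Q = θ(P)` for the inherited permutation `θ`, is self-paired (`θ` maps `D` onto
itself), then `θ` has order two. -/
theorem stmt_12 {α : Type*} [Fintype α] [DecidableEq α] (D : Set (List α))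
    (hD : IsMaxArrowSP (Finset.univ : Finset α) D) (P Q : List α) (hPQ : P ≠ Q)
    (eP : IsExtremal D P) (eQ : IsExtremal D Q)
    (hu : ∀ l : List α, IsExtremal D l → l = P ∨ l = Q)
    (θ : Equiv.Perm α) (hθ : P.map θ = Q)
    (hsp : (fun l : List α => l.map θ) '' D = D) :
    θ ^ 2 = 1 := by
  have hQlin : IsLinOrd (Finset.univ : Finset α) Q := hD.1.1.1 Q eQ.1
  have hPlin : IsLinOrd (Finset.univ : Finset α) P := hD.1.1.1 P eP.1
  have hQe : IsExtremal D (Q.map θ) := extremal_map D θ hsp Q eQ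
  have key : ∀ a : α, θ (θ a) = a := by
    rcases hu _ hQe with hq | hq
    · -- Q.map θ = P
      have : (P.map (θ : α → α)).map (θ : α → α) = P := by rw [hθ, hq]
      rw [List.map_map] at this
      intro a
      exact map_fix_aux _ P this a ((hPlin.2 a).mpr (Finset.mem_univ a))
    · -- Q.map θ = Q : θ fixes everything
      have hf : ∀ a ∈ Q, θ a = a := map_fix_aux _ Q hq
      intro a
      have ha : a ∈ Q := (hQlin.2 a).mpr (Finset.mem_univ a)
      rw [hf a ha, hf a ha]
  ext a
  simp [pow_succ, key a]
end

section
/- Let D be a maximal Arrow's single-peaked domain on a set A with inherited permutation θ_D. Then D is self-paired if and only if for every 3-element subset T ⊆ A, whenever x is a never-bottom element of T for D, θ_D(x) is a never-bottom element of θ_D(T) for D. -/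
lemma restrict_map {α : Type*} [DecidableEq α] (f : Equiv.Perm α) (l : List α) (S : Finset α) :
    restrictList (l.map f) (S.image f) = (restrictList l S).map f := by
  unfold restrictList
  induction l with
  | nil => simp
  | cons a t ih =>
    simp only [List.map_cons, List.filter_cons]
    by_cases h : a ∈ S
    · rw [if_pos (by simpa using Finset.mem_image_of_mem f h), if_pos (by simpa using h),
        List.map_cons, ih]
    · rw [if_neg, if_neg (by simpa using h), ih]
      simp only [decide_eq_true_eq, Finset.mem_image]
      rintro ⟨x, hx, hfx⟩
      exact h (f.injective hfx ▸ hx)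

lemma linord_map {α : Type*} [Fintype α] (f : Equiv.Perm α) (l : List α)
    (hl : IsLinOrd (Finset.univ : Finset α) l) : IsLinOrd (Finset.univ : Finset α) (l.map f) := by
  refine ⟨hl.1.map f.injective, fun a => ?_⟩
  simp only [Finset.mem_univ, iff_true, List.mem_map]
  exact ⟨f.symm a, (hl.2 _).mpr (Finset.mem_univ _), f.apply_symm_apply a⟩

lemma last_restrict_map {α : Type*} [DecidableEq α] (f : Equiv.Perm α) (l : List α)
    (S : Finset α) (x : α) (h : (restrictList l S).getLast? ≠ some x) :
    (restrictList (l.map f) (S.image f)).getLast? ≠ some (f x) := by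
  rw [restrict_map, List.getLast?_map]
  cases hm : (restrictList l S).getLast? with
  | none => simp
  | some y =>
    simp only [Option.map_some, ne_eq, Option.some_inj]
    intro hy
    exact h (by rw [hm, f.injective hy])

/-- A maximal Arrow's single-peaked domain `D` with inherited permutation `θ` is
self-paired iff for every triple `T`, whenever `x` is a never-bottom element of `T`
for `D`, `θ(x)` is a never-bottom element of `θ(T)` for `D`. -/
theorem stmt_13 {α : Type*} [Fintype α] [DecidableEq α] (D : Set (List α))
    (hD : IsMaxArrowSP (Finset.univ : Finset α) D) (P Q : List α) (hPQ : P ≠ Q)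
    (eP : IsExtremal D P) (eQ : IsExtremal D Q)
    (hu : ∀ l : List α, IsExtremal D l → l = P ∨ l = Q)
    (θ : Equiv.Perm α) (hθ : P.map θ = Q) :
    (fun l : List α => l.map θ) '' D = D ↔
      ∀ T : Finset α, T.card = 3 → ∀ x : α, NeverBottom D T x →
        NeverBottom D (T.image θ) (θ x) := by
  obtain ⟨⟨⟨hlin, _⟩, hmax⟩, _, hSP⟩ := hD
  constructor
  · -- self-paired → never-bottom preserved
    intro hself T _ x hx
    refine ⟨Finset.mem_image_of_mem θ hx.1, fun l hl => ?_⟩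
    have hl' : l ∈ (fun l : List α => l.map θ) '' D := hself.symm ▸ hl
    obtain ⟨m, hm, rfl⟩ := hl'
    exact last_restrict_map θ m T x (hx.2 m hm)
  · -- never-bottom preserved → self-paired
    intro H
    -- For every triple `T` there is an element never at the bottom for `D ∪ θ '' D`.
    have key : ∀ T : Finset α, T.card = 3 → ∃ y ∈ T,
        (∀ l ∈ D, (restrictList l T).getLast? ≠ some y) ∧
        (∀ l ∈ D, (restrictList (l.map θ) T).getLast? ≠ some y) := by
      intro T hT3
      set T' : Finset α := T.image θ.symm with hT'
      have hT'3 : T'.card = 3 := by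
        rw [hT', Finset.card_image_of_injective _ θ.symm.injective, hT3]
      have hTT : T'.image θ = T := by
        rw [hT', Finset.image_image]
        have : (⇑θ ∘ ⇑θ.symm) = id := by ext a; simp
        rw [this, Finset.image_id]
      obtain ⟨x, hx⟩ := hSP T' (Finset.subset_univ _) hT'3
      have hnb : NeverBottom D T (θ x) := by
        have := H T' hT'3 x hx
        rwa [hTT] at this
      refine ⟨θ x, hnb.1, hnb.2, fun l hl => ?_⟩
      rw [← hTT]
      exact last_restrict_map θ l T' x (hx.2 l hl)
    -- `D ∪ θ '' D` is a Condorcet domain.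
    have hcd : IsCondorcetDomain (Finset.univ : Finset α)
        (D ∪ (fun l : List α => l.map θ) '' D) := by
      constructor
      · rintro l (hl | ⟨m, hm, rfl⟩)
        · exact hlin l hl
        · exact linord_map θ m (hlin m hm)
      · rintro ⟨a, b, c, hab, hac, hbc, v₁, hv₁, v₂, hv₂, v₃, hv₃, r₁, r₂, r₃⟩
        have hT3 : ({a, b, c} : Finset α).card = 3 :=
          Finset.card_eq_three.mpr ⟨a, b, c, hab, hac, hbc, rfl⟩
        obtain ⟨y, hyT, hy1, hy2⟩ := key {a, b, c} hT3
        have hbot : ∀ v ∈ D ∪ (fun l : List α => l.map θ) '' D,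
            (restrictList v {a, b, c}).getLast? ≠ some y := by
          rintro v (hv | ⟨m, hm, rfl⟩)
          · exact hy1 v hv
          · exact hy2 m hm
        have h1 := hbot v₁ hv₁
        have h2 := hbot v₂ hv₂
        have h3 := hbot v₃ hv₃
        rw [r₁] at h1; rw [r₂] at h2; rw [r₃] at h3
        simp only [List.getLast?, ne_eq, Option.some_inj] at h1 h2 h3
        have : y ∈ ({a, b, c} : Finset α) := hyT
        simp only [Finset.mem_insert, Finset.mem_singleton] at this
        rcases this with rfl | rfl | rfl
        · exact h2 rfl
        · exact h3 rfl
        · exact h1 rfl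
    -- Maximality: the union equals `D`, so `θ '' D ⊆ D`.
    have hsub : (fun l : List α => l.map θ) '' D ⊆ D := by
      have heq := hmax _ hcd Set.subset_union_left
      intro l hl
      have h : l ∈ D ∪ (fun l : List α => l.map θ) '' D := Set.subset_union_right hl
      rwa [heq] at h
    -- Powers of θ also map `D` into `D`.
    have hpow : ∀ k : ℕ, (fun l : List α => l.map (θ ^ k)) '' D ⊆ D := by
      intro k
      induction k with
      | zero =>
        intro l hl
        obtain ⟨m, hm, rfl⟩ := hl
        simpa using hm
      | succ k ih =>
        rintro l ⟨m, hm, rfl⟩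
        have hmap : m.map ⇑(θ ^ (k + 1)) = (m.map ⇑(θ ^ k)).map θ := by
          rw [List.map_map]
          congr 1
          ext a
          simp [pow_succ']
        show List.map (⇑(θ ^ (k + 1))) m ∈ D
        rw [hmap]
        exact hsub ⟨m.map ⇑(θ ^ k), ih ⟨m, hm, rfl⟩, rfl⟩
    -- Since θ has finite order, the inclusion is an equality.
    refine Set.Subset.antisymm hsub ?_
    intro l hl
    have npos : 0 < orderOf θ := orderOf_pos θ
    obtain ⟨k, hk⟩ : ∃ k, orderOf θ = k + 1 := ⟨orderOf θ - 1, (Nat.succ_pred_eq_of_pos npos).symm⟩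
    have h1 : l.map ⇑(θ ^ orderOf θ) = l := by
      rw [pow_orderOf_eq_one]
      simp
    have h2 : l.map ⇑(θ ^ (k + 1)) = (l.map ⇑(θ ^ k)).map θ := by
      rw [List.map_map]
      congr 1
      ext a
      simp [pow_succ']
    refine ⟨l.map ⇑(θ ^ k), hpow k ⟨l, hl, rfl⟩, ?_⟩
    show (l.map ⇑(θ ^ k)).map θ = l
    rw [← h2, ← hk, h1]
end
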